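/- In the Lions and Contamination game on any finite graph G, if L lions have a winning strategy (a finite sequence of simultaneous single-edge-or-stay moves clearing all contamination), then the inspection number of G satisfies In(G) ≤ 2L. Consequently L(G) ≥ In(G)/2. -/
import Mathlib


/-- `lionContam G P t v` : vertex `v` is contaminated after turn `t`, when the
lions move according to `P`. Initially every unoccupied vertex is contaminated;
each turn contamination spreads along every edge not traversed by a lion that
turn, and a vertex occupied by a lion is clear. -/
def lionContam {V : Type*} (G : SimpleGraph V) {L : ℕ} (P : ℕ → Fin L → V) :
    ℕ → V → Prop
  | 0, v => ∀ j, P 0 j ≠ v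
  | (t+1), v => (∀ j, P (t+1) j ≠ v) ∧
      (lionContam G P t v ∨ ∃ u, lionContam G P t u ∧ G.Adj u v ∧
        ¬ ∃ j, (P t j = u ∧ P (t+1) j = v) ∨ (P t j = v ∧ P (t+1) j = u))

/-- `L` lions have a winning strategy in the Lions and Contamination game on `G`. -/
def lionClears {V : Type*} (G : SimpleGraph V) (L : ℕ) : Prop :=
  ∃ (P : ℕ → Fin L → V) (T : ℕ),
    (∀ t j, P (t+1) j = P t j ∨ G.Adj (P t j) (P (t+1) j)) ∧
    ∀ v, ¬ lionContam G P T v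

/-- The searcher wins the Zero-Visibility `k`-Search game on `G`:
some finite sequence of searches of at most `k` vertices per turn catches every
intruder trajectory (which moves along an edge or stays put each turn). -/
def searchWins {V : Type*} [DecidableEq V] (G : SimpleGraph V) (k : ℕ) : Prop :=
  ∃ (S : ℕ → Finset V) (T : ℕ),
    (∀ t, (S t).card ≤ k) ∧
    ∀ w : ℕ → V, (∀ t, w (t+1) = w t ∨ G.Adj (w t) (w (t+1))) →
      ∃ t < T, w t ∈ S t

theorem inspection_le_two_lion {V : Type*} [Fintype V] [DecidableEq V]
    (G : SimpleGraph V) (L : ℕ) (h : lionClears G L) :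
    searchWins G (2 * L) ∧
    sInf {k | searchWins G k} ≤ 2 * sInf {L' | lionClears G L'} := by
  have key : ∀ L' : ℕ, lionClears G L' → searchWins G (2 * L') := by
    intro L' ⟨P, T, hmove, hclear⟩
    refine ⟨fun t => (Finset.univ.image (P t)) ∪ (Finset.univ.image (P (t+1))), T + 1, ?_, ?_⟩
    · intro t
      calc ((Finset.univ.image (P t)) ∪ (Finset.univ.image (P (t+1)))).card
          ≤ (Finset.univ.image (P t)).card + (Finset.univ.image (P (t+1))).card :=
            Finset.card_union_le _ _
        _ ≤ L' + L' := by
            refine Nat.add_le_add ?_ ?_ <;>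
              simpa using (Finset.card_image_le).trans (by simp)
        _ = 2 * L' := by ring
    · intro w hw
      by_contra hcon
      push_neg at hcon
      have hno : ∀ t ≤ T, (∀ j, P t j ≠ w t) ∧ (∀ j, P (t+1) j ≠ w t) := by
        intro t ht
        have := hcon t (Nat.lt_succ_of_le ht)
        simp only [Finset.mem_union, Finset.mem_image, Finset.mem_univ, true_and,
          not_or, not_exists] at this
        exact this
      have main : ∀ t ≤ T, lionContam G P t (w t) := by
        intro t
        induction t with
        | zero => intro _ j; exact (hno 0 (Nat.zero_le _)).1 j
        | succ t ih =>
          intro ht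
          have ht' : t ≤ T := Nat.le_of_succ_le ht
          refine ⟨(hno (t+1) ht).1, ?_⟩
          rcases hw t with heq | hadj
          · left; rw [heq]; exact ih ht'
          · right
            refine ⟨w t, ih ht', hadj, ?_⟩
            rintro ⟨j, ⟨h1, _⟩ | ⟨_, h2⟩⟩
            · exact (hno t ht').1 j h1
            · exact (hno t ht').2 j h2
      exact hclear (w T) (main T le_rfl)
  refine ⟨key L h, ?_⟩
  have hne : {L' | lionClears G L'}.Nonempty := ⟨L, h⟩
  have hmem : sInf {L' | lionClears G L'} ∈ {L' | lionClears G L'} := Nat.sInf_mem hne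
  exact Nat.sInf_le (key _ hmem)
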